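/- Let g ≥ 1 and let S_1 ≤ S_2 ≤ … ≤ S_g be positive integers, and set A_i := Σ_{k=1}^g min(S_i, S_k) for i = 1,…,g. For every real number L with L > 2·A_g, the g×g real matrix B defined by B_{ij} := (L − 2A_i)·δ_{ij} + 2·min(S_i, S_j) is symmetric and positive definite. -/

import Mathlib

open scoped BigOperators
open Matrix

/-- For soliton lengths `S 0 ≤ ⋯ ≤ S (g-1)` (positive integers),
`A i := ∑ k, min (S i) (S k)`, and any real `L > 2 * A (last)`, the period matrix
`B i j = (L - 2 A i) δ_{ij} + 2 min (S i) (S j)` is symmetric and positive definite. -/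
theorem stmt0 (g : ℕ) (hg : 1 ≤ g) (S : Fin g → ℤ)
    (hpos : ∀ i, 0 < S i) (hmono : Monotone S)
    (A : Fin g → ℤ) (hA : ∀ i, A i = ∑ k, min (S i) (S k))
    (L : ℝ) (hL : L > 2 * ((A ⟨g - 1, by omega⟩ : ℤ) : ℝ))
    (B : Matrix (Fin g) (Fin g) ℝ)
    (hB : ∀ i j, B i j = (L - 2 * ((A i : ℤ) : ℝ)) * (if i = j then 1 else 0)
        + 2 * ((min (S i) (S j) : ℤ) : ℝ)) :
    B.IsSymm ∧ B.PosDef := by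
  set last : Fin g := ⟨g - 1, by omega⟩ with hlastdef
  have hle_last : ∀ i : Fin g, i ≤ last := by
    intro i
    have := i.isLt
    exact Fin.mk_le_mk.mpr (by omega) |>.trans_eq rfl
  have hAle : ∀ i, A i ≤ A last := by
    intro i
    rw [hA, hA]
    apply Finset.sum_le_sum
    intro k _
    exact min_le_min (hmono (hle_last i)) le_rfl
  have hsym : B.IsSymm := by
    ext i j
    simp only [Matrix.transpose_apply, hB]
    rw [min_comm]
    by_cases h : i = j
    · subst h; simp
    · rw [if_neg h, if_neg (fun h' : j = i => h h'.symm)]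
      ring
  refine ⟨hsym, Matrix.PosDef.of_dotProduct_mulVec_pos ?_ ?_⟩
  · -- IsHermitian
    ext i j
    simpa using congrFun (congrFun hsym i) j
  intro x hx
  set N : ℕ := (S last).toNat with hN
  set c : Fin g → ℕ → ℝ := fun i m => if (m : ℤ) < S i then 1 else 0 with hc
  have key : ∀ i j : Fin g, ((min (S i) (S j) : ℤ) : ℝ)
      = ∑ m ∈ Finset.range N, c i m * c j m := by
    intro i j
    have h1 : ∀ m : ℕ, c i m * c j m
        = if (m : ℤ) < min (S i) (S j) then (1 : ℝ) else 0 := by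
      intro m
      simp only [hc, lt_min_iff]
      by_cases h1 : (m : ℤ) < S i <;> by_cases h2 : (m : ℤ) < S j <;> simp [h1, h2]
    simp only [h1]
    rw [Finset.sum_boole]
    have hfil : (Finset.range N).filter (fun m : ℕ => (m : ℤ) < min (S i) (S j))
        = Finset.range (min (S i) (S j)).toNat := by
      ext m
      have h1 : S i ≤ S last := hmono (hle_last i)
      have h2 : 0 < S i := hpos i
      have h3 : 0 < S j := hpos j
      simp only [Finset.mem_filter, Finset.mem_range, hN]
      constructor
      · rintro ⟨-, h⟩; omega
      · intro h; omega
    rw [hfil, Finset.card_range]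
    have : (0 : ℤ) ≤ min (S i) (S j) := le_min (hpos i).le (hpos j).le
    have h5 := Int.toNat_of_nonneg this
    exact_mod_cast h5.symm
  have hq : x ⬝ᵥ B *ᵥ x
      = (∑ i, (L - 2 * ((A i : ℤ) : ℝ)) * x i ^ 2)
        + 2 * ∑ m ∈ Finset.range N, (∑ i, c i m * x i) ^ 2 := by
    have e1 : x ⬝ᵥ B *ᵥ x = ∑ i, ∑ j, B i j * x i * x j := by
      simp only [dotProduct, Matrix.mulVec, Finset.mul_sum]
      apply Finset.sum_congr rfl
      intro i _
      apply Finset.sum_congr rfl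
      intro j _
      ring
    rw [e1]
    have e2 : ∀ i j : Fin g, B i j * x i * x j
        = ((L - 2 * ((A i : ℤ) : ℝ)) * (if i = j then 1 else 0) * x i * x j)
          + ∑ m ∈ Finset.range N, 2 * (c i m * x i) * (c j m * x j) := by
      intro i j
      rw [hB, key]
      rw [add_mul, add_mul, Finset.mul_sum, Finset.sum_mul, Finset.sum_mul]
      congr 1
      apply Finset.sum_congr rfl
      intro m _
      ring
    simp only [e2, Finset.sum_add_distrib]
    congr 1
    · apply Finset.sum_congr rfl
      intro i _
      rw [Finset.sum_eq_single i]
      · simp; ring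
      · intro j _ hj; simp [Ne.symm hj]
      · intro h; exact absurd (Finset.mem_univ i) h
    · rw [Finset.mul_sum]
      have s1 : ∀ i : Fin g, (∑ j : Fin g, ∑ m ∈ Finset.range N,
          2 * (c i m * x i) * (c j m * x j))
          = ∑ m ∈ Finset.range N, ∑ j : Fin g, 2 * (c i m * x i) * (c j m * x j) :=
        fun i => Finset.sum_comm
      have s2 : (∑ i : Fin g, ∑ j : Fin g, ∑ m ∈ Finset.range N,
          2 * (c i m * x i) * (c j m * x j))
          = ∑ i : Fin g, ∑ m ∈ Finset.range N, ∑ j : Fin g,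
            2 * (c i m * x i) * (c j m * x j) :=
        Finset.sum_congr rfl fun i _ => s1 i
      rw [s2, Finset.sum_comm]
      apply Finset.sum_congr rfl
      intro m _
      rw [sq, Finset.sum_mul_sum]
      simp only [Finset.mul_sum]
      refine Finset.sum_congr rfl fun a _ => Finset.sum_congr rfl fun b _ => by ring
  have hstar : star x = x := by simp
  rw [hstar, hq]
  have hc0 : 0 < L - 2 * ((A last : ℤ) : ℝ) := by linarith
  have hsum2 : 0 ≤ 2 * ∑ m ∈ Finset.range N, (∑ i, c i m * x i) ^ 2 := by
    positivity
  have hsq : 0 < ∑ i, x i ^ 2 := by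
    have : ∃ i, x i ≠ 0 := by
      by_contra h
      push_neg at h
      exact hx (funext h)
    obtain ⟨i, hi⟩ := this
    have h1 : 0 < x i ^ 2 := by positivity
    have h2 : ∀ j ∈ Finset.univ, (0:ℝ) ≤ x j ^ 2 := fun j _ => sq_nonneg _
    exact Finset.sum_pos' h2 ⟨i, Finset.mem_univ i, h1⟩
  have hfirst : (L - 2 * ((A last : ℤ) : ℝ)) * ∑ i, x i ^ 2
      ≤ ∑ i, (L - 2 * ((A i : ℤ) : ℝ)) * x i ^ 2 := by
    rw [Finset.mul_sum]
    apply Finset.sum_le_sum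
    intro i _
    apply mul_le_mul_of_nonneg_right _ (sq_nonneg _)
    have : ((A i : ℤ) : ℝ) ≤ ((A last : ℤ) : ℝ) := by exact_mod_cast hAle i
    linarith
  have : 0 < (L - 2 * ((A last : ℤ) : ℝ)) * ∑ i, x i ^ 2 := mul_pos hc0 hsq
  linarith
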